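/- Let g : ℕ → ℕ be nondecreasing with positive values, set g(-1) = 0 and d(n) = g(n) - g(n-1), and suppose d(n) ≤ r·d(n-1) for all n ≥ 1, where r > 1. Then there exists a set S with an action of the free monoid W_r on r generators and a finite subset A ⊆ S generating S, such that the ball AW_r(n) (elements reachable from A by words of length at most n) has exactly g(n) elements for every n ≥ 0. -/

import Mathlib

/-- The ball of radius `n` around a subset `A` of an act over the free monoid of rank `r`:
the action of the free monoid is determined by the action `act` of the `r` generators,
and a word `w` (a list of generators) acts via `List.foldl act`. -/
def actBall {S : Type*} {r : ℕ} (act : S → Fin r → S) (A : Set S) (n : ℕ) : Set S :=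
  {x | ∃ a ∈ A, ∃ w : List (Fin r), w.length ≤ n ∧ w.foldl act a = x}

section Aux

variable (r : ℕ) {g : ℕ → ℕ}

/-- Shifted version of `g`: `Gsh g n = g (n-1)` with `Gsh g 0 = 0`. -/
def Gsh (g : ℕ → ℕ) : ℕ → ℕ := fun n => match n with | 0 => 0 | n + 1 => g n

/-- The carrier set. -/
@[reducible] def Sg (g : ℕ → ℕ) : Type := {k : ℕ // ∃ n, k < g n}

lemma Gsh_le (hmono : Monotone g) (n : ℕ) : Gsh g n ≤ g n := by
  cases n with
  | zero => exact Nat.zero_le _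
  | succ p => exact hmono (Nat.le_succ p)

lemma g_le_Gsh (hmono : Monotone g) {i m : ℕ} (h : i < m) : g i ≤ Gsh g m := by
  cases m with
  | zero => omega
  | succ p => exact hmono (by omega)

variable (hmono : Monotone g)

/-- The action of the generators. -/
def myAct (x : Sg g) (j : Fin r) : Sg g :=
  if h : g (Nat.find x.2 + 1) = g (Nat.find x.2) then x
  else ⟨g (Nat.find x.2) + min ((x.1 - Gsh g (Nat.find x.2)) * r + j.1)
        (g (Nat.find x.2 + 1) - g (Nat.find x.2) - 1),
    Nat.find x.2 + 1 + 1, by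
      have h1 : g (Nat.find x.2) ≤ g (Nat.find x.2 + 1) := hmono (Nat.le_succ _)
      have h2 : min ((x.1 - Gsh g (Nat.find x.2)) * r + j.1)
          (g (Nat.find x.2 + 1) - g (Nat.find x.2) - 1)
          ≤ g (Nat.find x.2 + 1) - g (Nat.find x.2) - 1 := min_le_right _ _
      have h3 : g (Nat.find x.2 + 1) ≤ g (Nat.find x.2 + 1 + 1) := hmono (Nat.le_succ _)
      omega⟩

lemma myAct_lt (x : Sg g) (j : Fin r) {n : ℕ} (hx : x.1 < g n) :
    (myAct r hmono x j).1 < g (n + 1) := by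
  have hmn : Nat.find x.2 ≤ n := Nat.find_le hx
  unfold myAct
  split_ifs with h
  · exact lt_of_lt_of_le hx (hmono (Nat.le_succ n))
  · simp only
    have h1 : g (Nat.find x.2) < g (Nat.find x.2 + 1) :=
      lt_of_le_of_ne (hmono (Nat.le_succ _)) (Ne.symm h)
    have h2 : g (Nat.find x.2 + 1) ≤ g (n + 1) := hmono (by omega)
    have h3 : min ((x.1 - Gsh g (Nat.find x.2)) * r + j.1)
        (g (Nat.find x.2 + 1) - g (Nat.find x.2) - 1)
        ≤ g (Nat.find x.2 + 1) - g (Nat.find x.2) - 1 := min_le_right _ _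
    omega

lemma myAct_val (x : Sg g) (j : Fin r) {m : ℕ} (hm : Nat.find x.2 = m)
    (h : ¬ g (m + 1) = g m) :
    (myAct r hmono x j).1
      = g m + min ((x.1 - Gsh g m) * r + j.1) (g (m + 1) - g m - 1) := by
  subst hm
  unfold myAct
  rw [dif_neg h]

lemma reach_step (hr : 0 < r)
    (hd0 : g 1 - g 0 ≤ r * g 0)
    (hd : ∀ n, g (n + 2) - g (n + 1) ≤ r * (g (n + 1) - g n))
    (m k : ℕ) (hk1 : g m ≤ k) (hk2 : k < g (m + 1)) :
    ∃ x : Sg g, x.1 < g m ∧ ∃ j : Fin r, (myAct r hmono x j).1 = k := by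
  have hGle : Gsh g m ≤ g m := Gsh_le hmono m
  have hdle : g (m + 1) - g m ≤ r * (g m - Gsh g m) := by
    cases m with
    | zero =>
      have h0 : Gsh g 0 = 0 := rfl
      rw [h0]; simpa using hd0
    | succ p =>
      have h0 : Gsh g (p + 1) = g p := rfl
      rw [h0]; exact hd p
  have hDmpos : 0 < g m - Gsh g m := by
    rcases Nat.eq_zero_or_pos (g m - Gsh g m) with h0 | h0
    · rw [h0, Nat.mul_zero] at hdle; omega
    · exact h0
  have hne : ¬ g (m + 1) = g m := by omega
  -- helper to build element of level m and compute the action on it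
  have build : ∀ k', Gsh g m ≤ k' → k' < g m → ∀ j : Fin r,
      ∃ x : Sg g, x.1 = k' ∧ (myAct r hmono x j).1
        = g m + min ((k' - Gsh g m) * r + j.1) (g (m + 1) - g m - 1) := by
    intro k' h1 h2 j
    refine ⟨⟨k', m, h2⟩, rfl, ?_⟩
    have hfind : Nat.find (⟨k', m, h2⟩ : Sg g).2 = m := by
      rw [Nat.find_eq_iff]
      exact ⟨h2, fun i hi => not_lt.2 (le_trans (g_le_Gsh hmono hi) h1)⟩
    rw [myAct_val r hmono _ j hfind hne]
  have hdle' : g (m + 1) - g m ≤ (g m - Gsh g m) * r := by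
    rw [Nat.mul_comm]; exact hdle
  by_cases hcase : k - g m + 1 < g (m + 1) - g m
  · -- generic element of level m+1
    obtain ⟨q, hq0⟩ : ∃ q, q = (k - g m) / r := ⟨_, rfl⟩
    obtain ⟨s, hs0⟩ : ∃ s, s = (k - g m) % r := ⟨_, rfl⟩
    have hslt : s < r := by rw [hs0]; exact Nat.mod_lt _ hr
    have hqs : q * r + s = k - g m := by rw [hq0, hs0]; exact Nat.div_add_mod' _ r
    have hq : q < g m - Gsh g m := by
      rw [hq0, Nat.div_lt_iff_lt_mul hr]
      exact lt_of_lt_of_le (by omega) hdle'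
    obtain ⟨x, hx1, hval⟩ := build (Gsh g m + q) (by omega) (by omega) ⟨s, hslt⟩
    refine ⟨x, by omega, ⟨s, hslt⟩, ?_⟩
    rw [hval, Nat.add_sub_cancel_left]
    have hjv : ((⟨s, hslt⟩ : Fin r) : ℕ) = s := rfl
    rw [hjv, hqs, min_eq_left (by omega)]
    omega
  · -- last element of level m+1
    have hj : r - 1 < r := by omega
    obtain ⟨x, hx1, hval⟩ := build (Gsh g m + (g m - Gsh g m - 1)) (by omega)
      (by omega) ⟨r - 1, hj⟩
    refine ⟨x, by omega, ⟨r - 1, hj⟩, ?_⟩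
    rw [hval, Nat.add_sub_cancel_left]
    have hjv : ((⟨r - 1, hj⟩ : Fin r) : ℕ) = r - 1 := rfl
    have hmul : (g m - Gsh g m - 1) * r = (g m - Gsh g m) * r - r :=
      Nat.sub_one_mul _ r
    have hge : r ≤ (g m - Gsh g m) * r := Nat.le_mul_of_pos_left r hDmpos
    rw [hjv, min_eq_right (by omega)]
    omega

lemma foldl_lt (w : List (Fin r)) : ∀ (x : Sg g) (n : ℕ), x.1 < g n →
    ((w.foldl (myAct r hmono) x).1 < g (n + w.length)) := by
  induction w with
  | nil => intro x n hx; simpa using hx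
  | cons j w ih =>
    intro x n hx
    simp only [List.foldl_cons, List.length_cons]
    have h1 := ih (myAct r hmono x j) (n + 1) (myAct_lt r hmono x j hx)
    have : n + 1 + w.length = n + (w.length + 1) := by omega
    rwa [this] at h1

lemma reach (hr : 0 < r)
    (hd0 : g 1 - g 0 ≤ r * g 0)
    (hd : ∀ n, g (n + 2) - g (n + 1) ≤ r * (g (n + 1) - g n)) :
    ∀ n k, k < g n → ∃ a : Sg g, a.1 < g 0 ∧
      ∃ w : List (Fin r), w.length ≤ n ∧ (w.foldl (myAct r hmono) a).1 = k := by
  intro n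
  induction n with
  | zero => intro k hk; exact ⟨⟨k, 0, hk⟩, hk, [], le_refl 0, rfl⟩
  | succ n ih =>
    intro k hk
    by_cases h : k < g n
    · obtain ⟨a, ha, w, hw, hfw⟩ := ih k h
      exact ⟨a, ha, w, by omega, hfw⟩
    · obtain ⟨x, hx, j, hj⟩ := reach_step r hmono hr hd0 hd n k (le_of_not_gt h) hk
      obtain ⟨a, ha, w, hw, hfw⟩ := ih x.1 hx
      refine ⟨a, ha, w ++ [j], by simp; omega, ?_⟩
      rw [List.foldl_append]
      simp only [List.foldl_cons, List.foldl_nil]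
      rw [show w.foldl (myAct r hmono) a = x from Subtype.ext hfw, hj]

end Aux

/-- Any nondecreasing positive integer function `g` with successive differences
`d(n) = g(n) - g(n-1)` (where `g(-1) = 0`) satisfying `d(n) ≤ r·d(n-1)` is the growth
function of a finitely generated act over the free monoid of rank `r > 1`. -/
theorem exists_act_with_growth (r : ℕ) (hr : 1 < r) (g : ℕ → ℕ)
    (hpos : ∀ n, 0 < g n) (hmono : Monotone g)
    (hd0 : g 1 - g 0 ≤ r * g 0)
    (hd : ∀ n, g (n + 2) - g (n + 1) ≤ r * (g (n + 1) - g n)) :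
    ∃ (S : Type) (act : S → Fin r → S) (A : Set S),
      A.Finite ∧ (∀ x : S, ∃ a ∈ A, ∃ w : List (Fin r), w.foldl act a = x) ∧
      ∀ n, (actBall act A n).ncard = g n := by
  have hr0 : 0 < r := by omega
  refine ⟨Sg g, myAct r hmono, {x : Sg g | x.1 < g 0}, ?_, ?_, ?_⟩
  · have hsub : {x : Sg g | x.1 < g 0} ⊆
        (fun i : Fin (g 0) => (⟨i.1, 0, i.2⟩ : Sg g)) '' Set.univ := by
      intro x hx
      exact ⟨⟨x.1, hx⟩, trivial, Subtype.ext rfl⟩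
    exact Set.Finite.subset (Set.finite_univ.image _) hsub
  · intro x
    obtain ⟨a, ha, w, _, hfw⟩ :=
      reach r hmono hr0 hd0 hd (Nat.find x.2) x.1 (Nat.find_spec x.2)
    exact ⟨a, ha, w, Subtype.ext hfw⟩
  · intro n
    have hset : actBall (myAct r hmono) {x : Sg g | x.1 < g 0} n
        = {x : Sg g | x.1 < g n} := by
      ext x
      constructor
      · rintro ⟨a, ha, w, hw, rfl⟩
        have h1 := foldl_lt r hmono w a 0 ha
        have h2 : g (0 + w.length) ≤ g n := hmono (by omega)
        exact lt_of_lt_of_le h1 h2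
      · intro hx
        obtain ⟨a, ha, w, hw, hfw⟩ := reach r hmono hr0 hd0 hd n x.1 hx
        exact ⟨a, ha, w, hw, Subtype.ext hfw⟩
    rw [hset]
    have himg : {x : Sg g | x.1 < g n}
        = (fun i : Fin (g n) => (⟨i.1, n, i.2⟩ : Sg g)) '' Set.univ := by
      ext x
      constructor
      · intro hx; exact ⟨⟨x.1, hx⟩, trivial, Subtype.ext rfl⟩
      · rintro ⟨i, -, rfl⟩; exact i.2
    have hinj : Function.Injective (fun i : Fin (g n) => (⟨i.1, n, i.2⟩ : Sg g)) := by
      intro i i' h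
      exact Fin.ext (congrArg Subtype.val h)
    rw [himg, Set.ncard_image_of_injective _ hinj, Set.ncard_univ,
      Nat.card_eq_fintype_card, Fintype.card_fin]
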